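/- Let L₁, …, L_N : ℝ^N → ℝ be C¹ near a point ĝ = (ĝ₁, …, ĝ_N), with Jacobian matrix J = (∂L_i/∂g_j) tridiagonal at every point near ĝ, nonzero off-diagonal entries, and det J(ĝ) = 0. Then the (N−1)×(N−1) Jacobian ∂(L₂,…,L_N)/∂(g₂,…,g_N) is invertible at ĝ, and there exist C¹ curves g̃_j(g₁) (j = 2, …, N) defined for g₁ near ĝ₁ with g̃_j(ĝ₁) = ĝ_j and L_j(g₁, g̃₂(g₁), …, g̃_N(g₁)) = L_j(ĝ) for all j = 2, …, N. -/

import Mathlib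

open Matrix

/-- Partial derivative of `f : (Fin N → ℝ) → ℝ` with respect to coordinate `j` at `g`. -/
noncomputable def partialDeriv {N : ℕ} (f : (Fin N → ℝ) → ℝ) (j : Fin N) (g : Fin N → ℝ) : ℝ :=
  deriv (fun t => f (Function.update g j t)) (g j)

lemma partialDeriv_eq_fderiv {N : ℕ} {f : (Fin N → ℝ) → ℝ} {g : Fin N → ℝ}
    (hf : DifferentiableAt ℝ f g) (j : Fin N) :
    partialDeriv f j g = fderiv ℝ f g (Pi.single j 1) := by
  have hu : ∀ t : ℝ, Function.update g j t = g + (t - g j) • (Pi.single j 1 : Fin N → ℝ) := by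
    intro t; funext k
    by_cases h : k = j
    · subst h; simp
    · simp [Function.update_of_ne h, Pi.single_eq_of_ne h]
  have hline : HasDerivAt (fun t => Function.update g j t) (Pi.single j 1) (g j) := by
    simp_rw [hu]
    have h1 : HasDerivAt (fun t : ℝ => t - g j) 1 (g j) := (hasDerivAt_id _).sub_const _
    simpa using (h1.smul_const (Pi.single j (1:ℝ))).const_add g
  have hcomp : HasDerivAt (fun t => f (Function.update g j t))
      (fderiv ℝ f g (Pi.single j 1)) (g j) := by
    have hf' : HasFDerivAt f (fderiv ℝ f g) (Function.update g j (g j)) := by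
      rw [Function.update_eq_self]; exact hf.hasFDerivAt
    exact hf'.comp_hasDerivAt (g j) hline
  exact hcomp.deriv

lemma tridiag_aux : ∀ (n : ℕ) (A : Matrix (Fin (n+1)) (Fin (n+1)) ℝ),
    (∀ i j, (i.val + 1 < j.val ∨ j.val + 1 < i.val) → A i j = 0) →
    (∀ i j, (i.val + 1 = j.val ∨ j.val + 1 = i.val) → A i j ≠ 0) →
    A.det = 0 → (A.submatrix Fin.succ Fin.succ).det ≠ 0 := by
  intro n
  induction n with
  | zero =>
    intro A _ _ _
    simp [Matrix.det_fin_zero]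
  | succ n ih =>
    intro A htri hoff hdet
    set A' := A.submatrix Fin.succ Fin.succ with hA'
    have htri' : ∀ i j : Fin (n+1), (i.val + 1 < j.val ∨ j.val + 1 < i.val) → A' i j = 0 := by
      intro i j h
      exact htri i.succ j.succ (by simp only [Fin.val_succ]; omega)
    have hoff' : ∀ i j : Fin (n+1), (i.val + 1 = j.val ∨ j.val + 1 = i.val) → A' i j ≠ 0 := by
      intro i j h
      exact hoff i.succ j.succ (by simp only [Fin.val_succ]; omega)
    have hB : (A.submatrix Fin.succ (Fin.succAbove 1)).det
        = A 1 0 * (A'.submatrix Fin.succ Fin.succ).det := by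
      rw [Matrix.det_succ_column_zero, Fin.sum_univ_succ]
      have h1 : ∀ i : Fin n, (A.submatrix Fin.succ (Fin.succAbove 1)) i.succ 0 = 0 := by
        intro i
        have : (1 : Fin (n+2)).succAbove 0 = 0 := by
          rw [Fin.succAbove_of_castSucc_lt] <;> simp
        simp only [Matrix.submatrix_apply, this]
        exact htri _ _ (Or.inr (by simp [Fin.val_succ]))
      have h2 : (A.submatrix Fin.succ (Fin.succAbove 1)) 0 0 = A 1 0 := by
        have : (1 : Fin (n+2)).succAbove 0 = 0 := by
          rw [Fin.succAbove_of_castSucc_lt] <;> simp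
        simp [this]
      have h3 : ((A.submatrix Fin.succ (Fin.succAbove 1)).submatrix (Fin.succAbove 0) Fin.succ)
          = A'.submatrix Fin.succ Fin.succ := by
        ext i j
        simp only [Matrix.submatrix_apply, Fin.succAbove_zero, hA']
        rw [Fin.succAbove_of_le_castSucc _ _ (by simp [Fin.le_def])]
      rw [h2, h3]
      simp only [h1, Matrix.submatrix_apply]
      simp
    have hexp : A.det = A 0 0 * A'.det
        - A 0 1 * (A 1 0 * (A'.submatrix Fin.succ Fin.succ).det) := by
      rw [Matrix.det_succ_row_zero, Fin.sum_univ_succ, Fin.sum_univ_succ]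
      have h0 : ∀ j : Fin n, A 0 (j.succ.succ) = 0 := by
        intro j
        exact htri _ _ (Or.inl (by simp [Fin.val_succ]))
      simp only [h0, Fin.succAbove_zero, Fin.succ_zero_eq_one, hB]
      simp [hA']
      ring
    intro h'
    have hminor := ih A' htri' hoff' h'
    have h9 : A 0 1 * (A 1 0 * (A'.submatrix Fin.succ Fin.succ).det) = 0 := by
      rw [hdet, h'] at hexp; linarith
    have h01 := hoff 0 1 (Or.inl (by simp))
    have h10 := hoff 1 0 (Or.inr (by simp))
    rcases mul_eq_zero.1 h9 with h | h
    · exact h01 h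
    rcases mul_eq_zero.1 h with h | h
    · exact h10 h
    · exact hminor h

theorem tridiagonal_jacobian_curves (M : ℕ) (L : Fin (M + 1) → (Fin (M + 1) → ℝ) → ℝ)
    (ghat : Fin (M + 1) → ℝ)
    (hC1 : ∀ i, ContDiffAt ℝ 1 (L i) ghat)
    (htri : ∀ᶠ g in nhds ghat, ∀ i j : Fin (M + 1),
      (i.val + 1 < j.val ∨ j.val + 1 < i.val) → partialDeriv (L i) j g = 0)
    (hoff : ∀ i j : Fin (M + 1), (i.val + 1 = j.val ∨ j.val + 1 = i.val) →
      partialDeriv (L i) j ghat ≠ 0)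
    (hdet : (Matrix.of fun i j => partialDeriv (L i) j ghat).det = 0) :
    (Matrix.of fun i j : Fin M =>
        partialDeriv (L i.succ) j.succ ghat).det ≠ 0 ∧
    ∃ gt : Fin M → ℝ → ℝ,
      (∀ j, ContDiffAt ℝ 1 (gt j) (ghat 0)) ∧
      (∀ j, gt j (ghat 0) = ghat j.succ) ∧
      (∀ᶠ g₁ in nhds (ghat 0), ∀ j : Fin M,
        L j.succ (Fin.cons g₁ (fun k => gt k g₁)) = L j.succ ghat) := by
  have htri0 := htri.self_of_nhds
  have hminor : (Matrix.of fun i j : Fin M =>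
      partialDeriv (L i.succ) j.succ ghat).det ≠ 0 := by
    have := tridiag_aux M (Matrix.of fun i j => partialDeriv (L i) j ghat) htri0 hoff hdet
    convert this using 2
    ext i j; rfl
  refine ⟨hminor, ?_⟩
  have hdiff : ∀ i, DifferentiableAt ℝ (L i) ghat := fun i => (hC1 i).differentiableAt one_ne_zero
  set Φ : (Fin (M+1) → ℝ) → (Fin (M+1) → ℝ) :=
    fun g => Fin.cons (g 0) (fun j => L j.succ g) with hΦ
  set φ : (Fin (M+1) → ℝ) →L[ℝ] (Fin (M+1) → ℝ) :=
    ContinuousLinearMap.pi (fun i => Fin.cases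
      (ContinuousLinearMap.proj 0) (fun j => fderiv ℝ (L j.succ) ghat) i) with hφ
  have hΦC1 : ContDiffAt ℝ 1 Φ ghat := by
    apply contDiffAt_pi.2
    intro i
    induction i using Fin.cases with
    | zero =>
      simp only [hΦ, Fin.cons_zero]
      exact (ContinuousLinearMap.proj (R := ℝ) (φ := fun _ : Fin (M+1) => ℝ)
        0).contDiff.contDiffAt
    | succ j =>
      simp only [hΦ, Fin.cons_succ]
      exact hC1 j.succ
  have hΦD : HasFDerivAt Φ φ ghat := by
    apply hasFDerivAt_pi'.2
    intro i
    rw [hφ, ContinuousLinearMap.proj_pi]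
    induction i using Fin.cases with
    | zero =>
      simp only [hΦ, Fin.cons_zero, Fin.cases_zero]
      exact (ContinuousLinearMap.proj (R := ℝ) (φ := fun _ : Fin (M+1) => ℝ) 0).hasFDerivAt
    | succ j =>
      simp only [hΦ, Fin.cons_succ, Fin.cases_succ]
      exact (hdiff j.succ).hasFDerivAt
  -- the matrix of φ and its determinant
  have hB0 : ∀ k : Fin (M+1),
      LinearMap.toMatrix' (φ : (Fin (M+1) → ℝ) →ₗ[ℝ] (Fin (M+1) → ℝ)) 0 k
        = (Pi.single k 1 : Fin (M+1) → ℝ) 0 := by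
    intro k
    rw [LinearMap.toMatrix'_apply]
    have : (fun j' : Fin (M+1) => if j' = k then (1:ℝ) else 0) = Pi.single k 1 := by
      funext j'; simp [Pi.single_apply]
    simp [hφ, ContinuousLinearMap.pi_apply]
  have hBs : ∀ (i : Fin M) (k : Fin (M+1)),
      LinearMap.toMatrix' (φ : (Fin (M+1) → ℝ) →ₗ[ℝ] (Fin (M+1) → ℝ)) i.succ k
        = partialDeriv (L i.succ) k ghat := by
    intro i k
    rw [LinearMap.toMatrix'_apply]
    have : (fun j' : Fin (M+1) => if j' = k then (1:ℝ) else 0) = Pi.single k 1 := by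
      funext j'; simp [Pi.single_apply]
    simp only [hφ, ContinuousLinearMap.pi_apply, Fin.cases_succ]
    exact (partialDeriv_eq_fderiv (hdiff i.succ) k).symm
  have hBdet : (LinearMap.toMatrix'
      (φ : (Fin (M+1) → ℝ) →ₗ[ℝ] (Fin (M+1) → ℝ))).det ≠ 0 := by
    rw [Matrix.det_succ_row_zero, Fin.sum_univ_succ]
    have hz : ∀ k : Fin M,
        LinearMap.toMatrix' (φ : (Fin (M+1) → ℝ) →ₗ[ℝ] (Fin (M+1) → ℝ)) 0 k.succ = 0 := by
      intro k; rw [hB0]; exact Pi.single_eq_of_ne (Fin.succ_ne_zero k).symm 1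
    have h1 : LinearMap.toMatrix' (φ : (Fin (M+1) → ℝ) →ₗ[ℝ] (Fin (M+1) → ℝ)) 0 0 = 1 := by
      rw [hB0]; simp
    have hsub : ((LinearMap.toMatrix'
        (φ : (Fin (M+1) → ℝ) →ₗ[ℝ] (Fin (M+1) → ℝ))).submatrix Fin.succ
          (Fin.succAbove 0)) = Matrix.of fun i j : Fin M =>
            partialDeriv (L i.succ) j.succ ghat := by
      ext i j
      simp only [Matrix.submatrix_apply, Fin.succAbove_zero, Matrix.of_apply]
      exact hBs i j.succ
    simp only [hz, h1, hsub]
    simpa using hminor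
  have hu : IsUnit (LinearMap.toMatrix (Pi.basisFun ℝ (Fin (M+1))) (Pi.basisFun ℝ (Fin (M+1)))
      (φ : (Fin (M+1) → ℝ) →ₗ[ℝ] (Fin (M+1) → ℝ))).det := by
    rw [LinearMap.toMatrix_eq_toMatrix']
    exact isUnit_iff_ne_zero.2 hBdet
  set e : (Fin (M+1) → ℝ) ≃L[ℝ] (Fin (M+1) → ℝ) :=
    (LinearEquiv.ofIsUnitDet hu).toContinuousLinearEquiv with he
  have hcoe : (e : (Fin (M+1) → ℝ) →L[ℝ] (Fin (M+1) → ℝ)) = φ := by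
    refine ContinuousLinearMap.ext fun x => ?_
    have h6 : (LinearEquiv.ofIsUnitDet hu) x = φ x :=
      DFunLike.congr_fun (LinearEquiv.coe_ofIsUnitDet hu) x
    simp [he, LinearEquiv.coe_toContinuousLinearEquiv', LinearEquiv.coe_coe]
  have hΦD' : HasFDerivAt Φ (e : (Fin (M+1) → ℝ) →L[ℝ] (Fin (M+1) → ℝ)) ghat := by
    rw [hcoe]; exact hΦD
  have hn1 : (1 : WithTop ℕ∞) ≠ 0 := one_ne_zero
  set Ψ : (Fin (M+1) → ℝ) → (Fin (M+1) → ℝ) := hΦC1.localInverse hΦD' hn1 with hΨdef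
  have hΨC1 : ContDiffAt ℝ 1 Ψ (Φ ghat) := hΦC1.to_localInverse hΦD' hn1
  have hΨim : Ψ (Φ ghat) = ghat := hΦC1.localInverse_apply_image hΦD' hn1
  have hright : ∀ᶠ y in nhds (Φ ghat), Φ (Ψ y) = y :=
    (hΦC1.hasStrictFDerivAt' hΦD' hn1).eventually_right_inverse
  set c : Fin M → ℝ := fun j => L j.succ ghat with hc
  set γ : ℝ → (Fin (M+1) → ℝ) := fun t => Fin.cons t c with hγdef
  have hγ : ContDiff ℝ 1 γ := by
    apply contDiff_pi.2
    intro i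
    induction i using Fin.cases with
    | zero => simp only [hγdef, Fin.cons_zero]; exact contDiff_id
    | succ j => simp only [hγdef, Fin.cons_succ]; exact contDiff_const
  have hγ0 : γ (ghat 0) = Φ ghat := by
    funext i
    induction i using Fin.cases with
    | zero => simp [hγdef, hΦ]
    | succ j => simp [hγdef, hΦ, hc]
  refine ⟨fun j t => Ψ (γ t) j.succ, ?_, ?_, ?_⟩
  · intro j
    have h1 : ContDiffAt ℝ 1 (Ψ ∘ γ) (ghat 0) := by
      apply ContDiffAt.comp
      · rw [hγ0]; exact hΨC1
      · exact hγ.contDiffAt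
    exact ((ContinuousLinearMap.proj (R := ℝ) (φ := fun _ : Fin (M+1) => ℝ)
      j.succ).contDiff.contDiffAt.comp _ h1)
  · intro j
    show Ψ (γ (ghat 0)) j.succ = ghat j.succ
    rw [hγ0, hΨim]
  · have hcont : ContinuousAt γ (ghat 0) := hγ.continuous.continuousAt
    have hev : ∀ᶠ t in nhds (ghat 0), Φ (Ψ (γ t)) = γ t := by
      have h2 : Filter.Tendsto γ (nhds (ghat 0)) (nhds (Φ ghat)) := by
        rw [← hγ0]; exact hcont
      exact h2.eventually hright
    filter_upwards [hev] with t ht j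
    have h0 : Ψ (γ t) 0 = t := by
      have h3 := congrFun ht 0
      simpa [hΦ, hγdef, Fin.cons_zero] using h3
    have hcons : (Fin.cons t (fun k => Ψ (γ t) k.succ) : Fin (M+1) → ℝ) = Ψ (γ t) := by
      funext i
      induction i using Fin.cases with
      | zero => simpa using h0.symm
      | succ k => simp
    show L j.succ (Fin.cons t (fun k => Ψ (γ t) k.succ)) = L j.succ ghat
    rw [hcons]
    have h4 := congrFun ht j.succ
    simpa [hΦ, hγdef, hc, Fin.cons_succ] using h4
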